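/- Let A be a commutative ring and E an A-module. Then E is flat over A if and only if for every n and every tuple f = (f₁, …, fₙ) ∈ Aⁿ, the module of relations R(f,E) = { (e₁,…,eₙ) ∈ Eⁿ : Σ fᵢ eᵢ = 0 } equals R(f,A)·E, i.e., every relation of f in E is an E-linear combination of relations of f in A. -/

import Mathlib

/-- Malgrange's criterion: a module `E` over a commutative ring `A` is flat iff for
every `n` and every `f = (f₁,…,fₙ) ∈ Aⁿ`, the module of relations
`R(f,E) = {e ∈ Eⁿ : Σ fᵢ eᵢ = 0}` equals `R(f,A)·E`, the submodule of `Eⁿ` generated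
by the tuples `(a₁ • x, …, aₙ • x)` with `(a₁,…,aₙ) ∈ R(f,A)` and `x ∈ E`. -/
theorem flat_iff_relations (A : Type) [CommRing A] (E : Type) [AddCommGroup E]
    [Module A E] :
    Module.Flat A E ↔
      ∀ (n : ℕ) (f : Fin n → A),
        {e : Fin n → E | ∑ i, f i • e i = 0} =
          (Submodule.span A
            {v : Fin n → E | ∃ a : Fin n → A,
              (∑ i, a i * f i = 0) ∧ ∃ x : E, v = fun i => a i • x} :
            Submodule A (Fin n → E)) := by
  constructor
  · intro hE n f
    apply Set.eq_of_subset_of_subset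
    · intro e he
      simp only [Set.mem_setOf_eq] at he
      obtain ⟨κ, a, y, hx, ha⟩ := Module.Flat.isTrivialRelation_of_sum_smul_eq_zero he
      have he' : e = ∑ j, (fun i => a i j • y j) := by
        funext i
        simp only [Finset.sum_apply]
        exact hx i
      rw [he']
      exact Submodule.sum_mem _ fun j _ =>
        Submodule.subset_span ⟨fun i => a i j, by simpa [mul_comm] using ha j, y j, rfl⟩
    · -- span of generators lies in the kernel set
      let L : (Fin n → E) →ₗ[A] E :=
        { toFun := fun e => ∑ i, f i • e i
          map_add' := by
            intro u v
            simp [smul_add, Finset.sum_add_distrib]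
          map_smul' := by
            intro c v
            simp [Finset.smul_sum, smul_comm c] }
      have : Submodule.span A
          {v : Fin n → E | ∃ a : Fin n → A,
            (∑ i, a i * f i = 0) ∧ ∃ x : E, v = fun i => a i • x} ≤ LinearMap.ker L := by
        rw [Submodule.span_le]
        rintro v ⟨a, ha, x, rfl⟩
        simp only [SetLike.mem_coe, LinearMap.mem_ker]
        show ∑ i, f i • a i • x = 0
        calc ∑ i, f i • a i • x = (∑ i, a i * f i) • x := by
              rw [Finset.sum_smul]
              exact Finset.sum_congr rfl fun i _ => by rw [smul_smul, mul_comm]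
          _ = 0 := by rw [ha, zero_smul]
      intro e he
      exact this he
  · intro h
    apply Module.Flat.of_forall_isTrivialRelation
    intro ι f x hx
    obtain ⟨e⟩ : Nonempty (Fin ι ≃ Fin (Fintype.card (Fin ι))) := ⟨Fintype.equivFin (Fin ι)⟩
    set m := Fintype.card (Fin ι)
    have hmem : (x ∘ e.symm) ∈ Submodule.span A
        {v : Fin m → E | ∃ a : Fin m → A,
          (∑ i, a i * (f ∘ e.symm) i = 0) ∧ ∃ z : E, v = fun i => a i • z} := by
      have hset := h m (f ∘ e.symm)
      have : (x ∘ e.symm) ∈ {v : Fin m → E | ∑ i, (f ∘ e.symm) i • v i = 0} := by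
        simp only [Set.mem_setOf_eq, Function.comp_apply]
        rw [Fintype.sum_equiv e.symm _ (fun i => f i • x i) (fun _ => rfl)]
        exact hx
      rw [hset] at this
      exact this
    rw [Submodule.mem_span_set'] at hmem
    obtain ⟨m', c, g, hg⟩ := hmem
    choose a ha y hy using fun j => (g j).2
    refine ⟨m', fun i j => c j * a j (e i), y, ?_, ?_⟩
    · intro i
      have h1 : x i = (∑ j, c j • (g j : Fin m → E)) (e i) := by
        rw [hg]; simp
      rw [h1]
      simp only [Finset.sum_apply, Pi.smul_apply]
      refine Finset.sum_congr rfl fun j _ => ?_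
      rw [hy j]
      simp [smul_smul]
    · intro j
      have h2 : ∑ i, f i * (c j * a j (e i)) = c j * ∑ k, a j k * (f ∘ e.symm) k := by
        rw [Finset.mul_sum]
        refine Fintype.sum_equiv e _ _ fun i => ?_
        simp [Function.comp_apply]
        ring
      rw [h2, ha j, mul_zero]
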